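/- Let C_n be the cycle on n≥3 vertices and H any connected graph. Then F(C_n +_S H) = n·F(H) + 6n·M₁(H) + 24n·|E(H)| + 16n·|V(H)|. -/

import Mathlib

open SimpleGraph Finset
open scoped Classical

noncomputable section

/-- The generalized hierarchical product `G(U)ΠH`. -/
def hierProd {α β : Type*} (G : SimpleGraph α) (H : SimpleGraph β) (U : Set α) :
    SimpleGraph (α × β) where
  Adj p q := (p.1 = q.1 ∧ p.1 ∈ U ∧ H.Adj p.2 q.2) ∨ (p.2 = q.2 ∧ G.Adj p.1 q.1)
  symm := ⟨by
    rintro p q (⟨h1, h2, h3⟩ | ⟨h1, h2⟩)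
    · exact Or.inl ⟨h1.symm, h1 ▸ h2, h3.symm⟩
    · exact Or.inr ⟨h1.symm, h2.symm⟩⟩
  loopless := ⟨by
    rintro p (⟨_, _, h⟩ | ⟨_, h⟩)
    · exact H.irrefl h
    · exact G.irrefl h⟩

/-- The F-index (forgotten topological index): sum of cubes of degrees. -/
def Findex {α : Type*} [Fintype α] (G : SimpleGraph α) : ℕ :=
  ∑ v, G.degree v ^ 3

/-- The first Zagreb index: sum of squares of degrees. -/
def M1 {α : Type*} [Fintype α] (G : SimpleGraph α) : ℕ :=
  ∑ v, G.degree v ^ 2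

/-- The general first Zagreb index with exponent `n`. -/
def xiIndex {α : Type*} [Fintype α] (G : SimpleGraph α) (n : ℕ) : ℕ :=
  ∑ v, G.degree v ^ n

/-- The redefined Zagreb index `ReZG(G) = Σ_{uv∈E} d(u)d(v)(d(u)+d(v))`. -/
def ReZG {α : Type*} [Fintype α] (G : SimpleGraph α) : ℕ :=
  ∑ e ∈ G.edgeFinset,
    Sym2.lift ⟨fun u v => G.degree u * G.degree v * (G.degree u + G.degree v),
      fun u v => by ring⟩ e

/-- The subdivision graph `S(G)`: each edge replaced by a path of length two. -/
def Sgraph {α : Type*} (G : SimpleGraph α) : SimpleGraph (α ⊕ ↥G.edgeSet) where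
  Adj x y :=
    match x, y with
    | Sum.inl u, Sum.inr e => u ∈ (e : Sym2 α)
    | Sum.inr e, Sum.inl u => u ∈ (e : Sym2 α)
    | _, _ => False
  symm := ⟨by rintro (u | e) (v | f) h <;> simp_all⟩
  loopless := ⟨by rintro (u | e) h <;> simp_all⟩

/-- The graph on `V(G) ⊕ E(G)` whose only edges are the original edges of `G`. -/
def Ograph {α : Type*} (G : SimpleGraph α) : SimpleGraph (α ⊕ ↥G.edgeSet) where
  Adj x y :=
    match x, y with
    | Sum.inl u, Sum.inl v => G.Adj u v
    | _, _ => False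
  symm := ⟨by rintro (u | e) (v | f) h <;> simp_all <;> exact h.symm⟩
  loopless := ⟨by rintro (u | e) h <;> simp_all⟩

/-- The graph on `V(G) ⊕ E(G)` whose edges join pairs of adjacent edges of `G`
(line-graph adjacency). -/
def Lgraph {α : Type*} (G : SimpleGraph α) : SimpleGraph (α ⊕ ↥G.edgeSet) where
  Adj x y :=
    match x, y with
    | Sum.inr e, Sum.inr f => e ≠ f ∧ ∃ u, u ∈ (e : Sym2 α) ∧ u ∈ (f : Sym2 α)
    | _, _ => False
  symm := ⟨by
    rintro (u | e) (v | f) h <;> simp_all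
    exact ⟨Ne.symm h.1, h.2.imp fun u hu => hu.symm⟩⟩
  loopless := ⟨by rintro (u | e) h <;> simp_all⟩

/-- The triangle parallel graph `R(G)`. -/
def Rgraph {α : Type*} (G : SimpleGraph α) : SimpleGraph (α ⊕ ↥G.edgeSet) :=
  Sgraph G ⊔ Ograph G

/-- The line superposition graph `Q(G)`. -/
def Qgraph {α : Type*} (G : SimpleGraph α) : SimpleGraph (α ⊕ ↥G.edgeSet) :=
  Sgraph G ⊔ Lgraph G

/-- The total graph `T(G)`. -/
def Tgraph {α : Type*} (G : SimpleGraph α) : SimpleGraph (α ⊕ ↥G.edgeSet) :=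
  Sgraph G ⊔ Ograph G ⊔ Lgraph G

/-- The F-sum `G +_F H`, where `K` is one of `S(G), R(G), Q(G), T(G)`:
the generalized hierarchical product `K(V(G))ΠH`. -/
def FSum {α β : Type*} {G : SimpleGraph α} (K : SimpleGraph (α ⊕ ↥G.edgeSet))
    (H : SimpleGraph β) : SimpleGraph ((α ⊕ ↥G.edgeSet) × β) :=
  hierProd K H (Set.range Sum.inl)

end
section Aux

open SimpleGraph Finset
open scoped Classical

variable {α β : Type*} [Fintype α] [Fintype β]

lemma hierProd_degree_mem (G : SimpleGraph α) (H : SimpleGraph β) (U : Set α)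
    {u : α} (hU : u ∈ U) (v : β) :
    (hierProd G H U).degree (u, v) = G.degree u + H.degree v := by
  classical
  have hnb : (hierProd G H U).neighborFinset (u, v) =
      ((H.neighborFinset v).image fun w => (u, w)) ∪
      ((G.neighborFinset u).image fun x => (x, v)) := by
    ext ⟨x, w⟩
    rw [mem_neighborFinset]
    simp only [mem_neighborFinset, hierProd, Finset.mem_union, Finset.mem_image]
    constructor
    · rintro (⟨h1, _, h3⟩ | ⟨h1, h2⟩)
      · exact Or.inl ⟨w, h3, by rw [h1]⟩
      · exact Or.inr ⟨x, h2, by rw [h1]⟩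
    · rintro (⟨w', hw', h⟩ | ⟨x', hx', h⟩)
      · obtain ⟨rfl, rfl⟩ := Prod.mk.injEq .. ▸ h
        exact Or.inl ⟨rfl, hU, hw'⟩
      · obtain ⟨rfl, rfl⟩ := Prod.mk.injEq .. ▸ h
        exact Or.inr ⟨rfl, hx'⟩
  have hdisj : Disjoint ((H.neighborFinset v).image fun w => (u, w))
      ((G.neighborFinset u).image fun x => (x, v)) := by
    rw [Finset.disjoint_left]
    rintro ⟨x, w⟩ h1 h2
    simp only [Finset.mem_image, mem_neighborFinset, Prod.mk.injEq] at h1 h2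
    obtain ⟨w', hw', rfl, rfl⟩ := h1
    obtain ⟨x', hx', rfl, rfl⟩ := h2
    exact G.irrefl hx'
  rw [SimpleGraph.degree, hnb, Finset.card_union_of_disjoint hdisj,
    Finset.card_image_of_injective _ (fun a b h => (Prod.mk.injEq .. ▸ h).2),
    Finset.card_image_of_injective _ (fun a b h => (Prod.mk.injEq .. ▸ h).1),
    SimpleGraph.degree, SimpleGraph.degree, add_comm]

lemma hierProd_degree_not_mem (G : SimpleGraph α) (H : SimpleGraph β) (U : Set α)
    {u : α} (hU : u ∉ U) (v : β) :
    (hierProd G H U).degree (u, v) = G.degree u := by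
  classical
  have hnb : (hierProd G H U).neighborFinset (u, v) =
      ((G.neighborFinset u).image fun x => (x, v)) := by
    ext ⟨x, w⟩
    rw [mem_neighborFinset]
    simp only [mem_neighborFinset, hierProd, Finset.mem_image]
    constructor
    · rintro (⟨_, h2, _⟩ | ⟨h1, h2⟩)
      · exact absurd h2 hU
      · exact ⟨x, h2, by rw [h1]⟩
    · rintro ⟨x', hx', h⟩
      obtain ⟨rfl, rfl⟩ := Prod.mk.injEq .. ▸ h
      exact Or.inr ⟨rfl, hx'⟩
  rw [SimpleGraph.degree, hnb,
    Finset.card_image_of_injective _ (fun a b h => (Prod.mk.injEq .. ▸ h).1)]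
  rfl

lemma Sgraph_degree_inl (G : SimpleGraph α) (u : α) :
    (Sgraph G).degree (Sum.inl u) = G.degree u := by
  classical
  rw [← card_neighborSet_eq_degree, ← card_incidenceSet_eq_degree]
  apply Fintype.card_congr
  refine ⟨fun x => match x with
    | ⟨Sum.inr e, h⟩ => ⟨e.val, e.property, h⟩,
    fun e => ⟨Sum.inr ⟨e.val, e.property.1⟩, e.property.2⟩, ?_, ?_⟩
  · rintro ⟨(v | e), h⟩
    · exact absurd h (by simp [Sgraph, mem_neighborSet])
    · rfl
  · rintro ⟨e, he⟩; rfl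

lemma Sgraph_degree_inr (G : SimpleGraph α) (e : G.edgeSet) :
    (Sgraph G).degree (Sum.inr e) = 2 := by
  classical
  obtain ⟨⟨a, b⟩, he⟩ := e
  have hab : a ≠ b := (G.mem_edgeSet.mp he).ne
  have hnb : (Sgraph G).neighborFinset (Sum.inr ⟨s(a, b), he⟩) =
      {Sum.inl a, Sum.inl b} := by
    ext (x | f)
    · rw [mem_neighborFinset]; simp [mem_neighborFinset, Sgraph, Sym2.mem_iff]
    · rw [mem_neighborFinset]; simp [mem_neighborFinset, Sgraph]
  rw [SimpleGraph.degree, hnb, Finset.card_pair (by simpa using hab)]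

end Aux

set_option maxHeartbeats 1000000 in
lemma deg_inl_cycle {β : Type*} [Fintype β] (m : ℕ) (H : SimpleGraph β)
    (u : Fin (m+3)) (v : β) :
    (FSum (Sgraph (cycleGraph (m+3))) H).degree (Sum.inl u, v) = 2 + H.degree v := by
  have h1 := hierProd_degree_mem (Sgraph (cycleGraph (m+3))) H (Set.range Sum.inl)
    (Set.mem_range_self u) v
  have h2 := Sgraph_degree_inl (cycleGraph (m+3)) u
  have h3 : (cycleGraph (m+3)).degree u = 2 := cycleGraph_degree_three_le
  rw [FSum]
  convert h1 using 2
  convert h2.symm using 2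
  convert h3.symm using 2

set_option maxHeartbeats 1000000 in
lemma deg_inr_cycle {β : Type*} [Fintype β] (m : ℕ) (H : SimpleGraph β)
    (e : (cycleGraph (m+3)).edgeSet) (v : β) :
    (FSum (Sgraph (cycleGraph (m+3))) H).degree (Sum.inr e, v) = 2 := by
  have h1 := hierProd_degree_not_mem (Sgraph (cycleGraph (m+3))) H (Set.range Sum.inl)
    (u := Sum.inr e) (by simp) v
  have h2 := Sgraph_degree_inr (cycleGraph (m+3)) e
  rw [FSum]
  convert h1 using 2
  convert h2.symm using 2

lemma card_edgeSet_cycle (m : ℕ) : Fintype.card (cycleGraph (m+3)).edgeSet = m + 3 := by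
  classical
  have h := (cycleGraph (m+3)).sum_degrees_eq_twice_card_edges
  have hs : ∀ v : Fin (m+3), (cycleGraph (m+3)).degree v = 2 := fun v => by
    convert (cycleGraph_degree_three_le (v := v)) using 2
  rw [Finset.sum_congr rfl fun v _ => hs v, Finset.sum_const, smul_eq_mul,
    Finset.card_univ, Fintype.card_fin] at h
  have h2 : #(cycleGraph (m+3)).edgeFinset = m + 3 := by omega
  rw [← Set.toFinset_card]
  convert h2 using 2
  ext; simp

set_option maxHeartbeats 1000000 in
theorem Findex_Ssum_cycle {β : Type*} [Fintype β] (n : ℕ) (hn : 3 ≤ n)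
    (H : SimpleGraph β) (hH : H.Connected) :
    Findex (FSum (Sgraph (cycleGraph n)) H) =
      n * Findex H + 6 * n * M1 H + 24 * n * H.edgeFinset.card
        + 16 * n * Fintype.card β := by
  classical
  obtain ⟨m, rfl⟩ : ∃ m, n = m + 3 := ⟨n - 3, by omega⟩
  rw [Findex, Fintype.sum_prod_type, Fintype.sum_sum_type]
  have h1 : ∀ u : Fin (m+3),
      ∑ v : β, (FSum (Sgraph (cycleGraph (m+3))) H).degree (Sum.inl u, v) ^ 3
      = Findex H + 6 * M1 H + 24 * #H.edgeFinset + 8 * Fintype.card β := by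
    intro u
    have hv : ∀ v : β, (FSum (Sgraph (cycleGraph (m+3))) H).degree (Sum.inl u, v) ^ 3
        = H.degree v ^ 3 + 6 * H.degree v ^ 2 + 12 * H.degree v + 8 := by
      intro v; rw [deg_inl_cycle]; ring
    rw [Finset.sum_congr rfl fun v _ => hv v]
    simp only [Finset.sum_add_distrib, ← Finset.mul_sum, Finset.sum_const, smul_eq_mul]
    rw [H.sum_degrees_eq_twice_card_edges]
    simp only [Findex, M1, Finset.card_univ]
    ring
  have h2 : ∀ e : (cycleGraph (m+3)).edgeSet,
      ∑ v : β, (FSum (Sgraph (cycleGraph (m+3))) H).degree (Sum.inr e, v) ^ 3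
      = 8 * Fintype.card β := by
    intro e
    rw [Finset.sum_congr rfl fun v _ => by rw [deg_inr_cycle m H e v]]
    simp [Finset.card_univ]
    ring
  rw [Finset.sum_congr rfl fun u _ => h1 u, Finset.sum_congr rfl fun e _ => h2 e]
  rw [Finset.sum_const, Finset.sum_const, smul_eq_mul, smul_eq_mul,
    Finset.card_univ, Finset.card_univ, Fintype.card_fin, card_edgeSet_cycle]
  ring
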